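/- Let I be a monomial ideal of Borel type in S = k[x_1,...,x_n] with irredundant irreducible decomposition I = q_1 ∩ ... ∩ q_r. Then the satiety of I equals the maximum of the satieties of the q_i; that is, max{ j : (I^{sat}/I)_j ≠ 0 } = max over i of max{ j : (q_i^{sat}/q_i)_j ≠ 0 }, with the convention max ∅ = −∞. -/

import Mathlib

open MvPolynomial DirectSum

noncomputable section




variable {k : Type} [Field k] {n : ℕ}

/-- The maximal graded ideal `(x_1, …, x_n)` of `k[x_1,…,x_n]`. -/
def maxIdeal (k : Type) [Field k] (n : ℕ) : Ideal (MvPolynomial (Fin n) k) :=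
  Ideal.span (Set.range X)

/-- The "infinite colon" `I : J^∞ = ⋃_t (I : J^t)`. -/
def infColon (I J : Ideal (MvPolynomial (Fin n) k)) : Ideal (MvPolynomial (Fin n) k) :=
  ⨆ t : ℕ, Submodule.colon I ((J ^ t : Ideal (MvPolynomial (Fin n) k)) : Set (MvPolynomial (Fin n) k))

/-- The saturation `I^{sat} = I : m^∞`. -/
def satur (I : Ideal (MvPolynomial (Fin n) k)) : Ideal (MvPolynomial (Fin n) k) :=
  infColon I (maxIdeal k n)

/-- A monomial ideal: an ideal generated by monomials. -/
def IsMonomialIdeal (I : Ideal (MvPolynomial (Fin n) k)) : Prop :=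
  ∃ A : Set (Fin n →₀ ℕ), I = Ideal.span ((fun u => monomial u (1 : k)) '' A)

/-- `I` is of Borel type: `I : (x_1,…,x_i)^∞ = I : x_i^∞` for all `i`. -/
def IsBorelType (I : Ideal (MvPolynomial (Fin n) k)) : Prop :=
  ∀ i : Fin n,
    infColon I (Ideal.span {f | ∃ j ≤ i, f = X j}) = infColon I (Ideal.span {X i})

/-- Total degree of an exponent vector. -/
def expDeg (u : Fin n →₀ ℕ) : ℕ := u.sum fun _ e => e

/-- The truncated ideal `I_{≥ e}`, generated by all monomials of degree `≥ e` lying in `I`. -/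
def truncGE (I : Ideal (MvPolynomial (Fin n) k)) (e : ℕ) : Ideal (MvPolynomial (Fin n) k) :=
  Ideal.span {f | ∃ u : Fin n →₀ ℕ, monomial u (1 : k) ∈ I ∧ e ≤ expDeg u ∧ f = monomial u (1 : k)}

/-- A stable monomial ideal: for every monomial `x^u ∈ I` with largest variable `x_j`
dividing it and every `i < j`, also `x_i x^u / x_j ∈ I`. -/
def IsStable (I : Ideal (MvPolynomial (Fin n) k)) : Prop :=
  ∀ u : Fin n →₀ ℕ, monomial u (1 : k) ∈ I →
    ∀ j : Fin n, j ∈ u.support → (∀ l ∈ u.support, l ≤ j) →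
      ∀ i : Fin n, i < j →
        monomial (u - Finsupp.single j 1 + Finsupp.single i 1) (1 : k) ∈ I

/-- The set of (exponent vectors of) minimal monomial generators of a monomial ideal. -/
def minGens (I : Ideal (MvPolynomial (Fin n) k)) : Set (Fin n →₀ ℕ) :=
  {u | monomial u (1 : k) ∈ I ∧ ∀ v : Fin n →₀ ℕ, monomial v (1 : k) ∈ I → v ≤ u → v = u}

/-- The irreducible monomial ideal `m^b = (x_i^{b_i} : b_i ≥ 1)`. -/
def irredPow (k : Type) [Field k] {n : ℕ} (b : Fin n →₀ ℕ) : Ideal (MvPolynomial (Fin n) k) :=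
  Ideal.span {f | ∃ i : Fin n, 1 ≤ b i ∧ f = (X i : MvPolynomial (Fin n) k) ^ b i}





/-- The product of the variables indexed by `F`. -/
def varProd (k : Type) [Field k] {n : ℕ} (F : Finset (Fin n)) : MvPolynomial (Fin n) k :=
  ∏ i ∈ F, X i

variable (M : Type) [AddCommGroup M] [Module (MvPolynomial (Fin n) k) M]

variable (k) in
/-- The localization of `M` at the product of the variables indexed by `F`. -/
abbrev locAt' (F : Finset (Fin n)) : Type :=
  LocalizedModule (Submonoid.powers (varProd k F)) M

variable (k n) in
/-- The `p`-th term of the Čech complex. -/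
abbrev cechC (p : ℕ) : Type :=
  DirectSum {F : Finset (Fin n) // F.card = p} (fun F => locAt' k M F.1)

lemma commute_aux {A : Type} [Ring A] {a b : A} (h : Commute a b) (hu : IsUnit (a * b)) :
    IsUnit a := by
  refine isUnit_iff_exists.mpr ⟨b * ↑hu.unit⁻¹, ?_, ?_⟩
  · rw [← mul_assoc]
    simpa using hu.unit.mul_inv
  · have hc : Commute a (↑hu.unit : A) := by
      have : (↑hu.unit : A) = a * b := hu.unit_spec
      rw [this]
      exact (Commute.refl a).mul_right h
    have hc' : Commute a (↑hu.unit⁻¹ : A) := hc.units_inv_right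
    calc b * ↑hu.unit⁻¹ * a = b * (a * ↑hu.unit⁻¹) := by rw [mul_assoc, hc'.eq]
    _ = (a * b) * ↑hu.unit⁻¹ := by rw [← mul_assoc]; exact congrArg (· * _) h.eq.symm
    _ = 1 := by simpa using hu.unit.mul_inv

lemma isUnit_algebraMap_end (u v w : MvPolynomial (Fin n) k) (hw : w = u * v)
    (s : Submonoid.powers u) :
    IsUnit ((algebraMap (MvPolynomial (Fin n) k)
      (Module.End (MvPolynomial (Fin n) k)
        (LocalizedModule (Submonoid.powers w) M))) s) := by
  subst hw
  obtain ⟨t, ht⟩ := s.2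
  have h1 : IsUnit ((algebraMap (MvPolynomial (Fin n) k)
      (Module.End (MvPolynomial (Fin n) k)
        (LocalizedModule (Submonoid.powers (u * v)) M))) ((u * v) ^ t)) :=
    IsLocalizedModule.map_units
      (LocalizedModule.mkLinearMap (Submonoid.powers (u * v)) M)
      (⟨(u * v) ^ t, ⟨t, rfl⟩⟩ : Submonoid.powers (u * v))
  have h2 : (u * v) ^ t = (s : MvPolynomial (Fin n) k) * v ^ t := by
    rw [mul_pow]; simp only [ht]
  rw [h2, map_mul] at h1
  exact commute_aux ((Commute.all _ _).map _) h1

/-- The canonical map between localizations of `M` for `F ⊆ G`. -/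
def locMap (F G : Finset (Fin n)) (h : F ⊆ G) :
    locAt' k M F →ₗ[MvPolynomial (Fin n) k] locAt' k M G := by
  refine LocalizedModule.lift _
    (LocalizedModule.mkLinearMap (Submonoid.powers (varProd k G)) M) ?_
  intro s
  have hFG : varProd k G = varProd k F * varProd k (G \ F) := by
    rw [varProd, varProd, varProd, ← Finset.prod_sdiff h, mul_comm]
  exact isUnit_algebraMap_end M _ _ _ hFG s

set_option maxHeartbeats 1000000 in
variable (k n) in
/-- The Čech differential. -/
def cechD (p : ℕ) : cechC k n M p →ₗ[MvPolynomial (Fin n) k] cechC k n M (p + 1) :=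
  DirectSum.toModule (MvPolynomial (Fin n) k) _ (cechC k n M (p + 1)) (fun F =>
    ∑ j : Fin n,
      if h : j ∈ F.1 then 0 else
        ((-1 : ℤ) ^ ((F.1.filter (· < j)).card)) •
          ((DirectSum.lof (MvPolynomial (Fin n) k) {G : Finset (Fin n) // G.card = p + 1}
              (fun G => locAt' k M G.1)
              ⟨insert j F.1, by rw [Finset.card_insert_of_notMem h, F.2]⟩).comp
            (locMap M F.1 (insert j F.1) (Finset.subset_insert _ _))))


variable (k n) in
/-- The cocycles at Čech degree `p`, as an additive subgroup. -/
def cechZ (p : ℕ) : AddSubgroup (cechC k n M p) :=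
  AddMonoidHom.ker (cechD k n M p).toAddMonoidHom

variable (k n) in
/-- The coboundaries at Čech degree `p`, as an additive subgroup. -/
def cechB (p : ℕ) : AddSubgroup (cechC k n M p) :=
  Nat.casesOn (motive := fun p => AddSubgroup (cechC k n M p)) p ⊥
    (fun q => AddMonoidHom.range (G := cechC k n M q) (N := cechC k n M (q + 1))
      ((cechD k n M q).toAddMonoidHom))

variable (k n) in
/-- The `p`-th (Čech) local cohomology of `M` with respect to the maximal graded
ideal: cocycles modulo coboundaries. -/
abbrev cechH (p : ℕ) : Type :=
  (cechZ k n M p) ⧸ ((cechB k n M p).addSubgroupOf (cechZ k n M p))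

variable (dg : ℤ → AddSubgroup M)

/-- The degree-`j` part of the localization of `M` at `x_F`, induced by a grading `dg`
of `M`: it is generated by the fractions `m / x_F^t` with `m` homogeneous of degree
`j + t·|F|`. -/
def locDeg (F : Finset (Fin n)) (j : ℤ) : AddSubgroup (locAt' k M F) :=
  AddSubgroup.closure
    {z | ∃ (t : ℕ) (m : M), m ∈ dg (j + t * F.card) ∧
      z = LocalizedModule.mk m (⟨varProd k F ^ t, ⟨t, rfl⟩⟩ : Submonoid.powers (varProd k F))}

variable (k n) in
/-- The degree-`j` part of the `p`-th Čech term. -/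
def cechDeg (p : ℕ) (j : ℤ) : AddSubgroup (cechC k n M p) where
  carrier := {x | ∀ F, x F ∈ locDeg M dg F.1 j}
  zero_mem' := by intro F; rw [DirectSum.zero_apply]; exact zero_mem _
  add_mem' := by intro a b ha hb F; rw [DirectSum.add_apply]; exact add_mem (ha F) (hb F)
  neg_mem' := by intro a ha F; rw [DFinsupp.neg_apply]; exact neg_mem (ha F)

variable (k n) in
/-- The degree-`j` part of the `p`-th local cohomology of `M`. -/
def cechHdeg (p : ℕ) (j : ℤ) : AddSubgroup (cechH k n M p) :=
  AddSubgroup.map (QuotientAddGroup.mk' ((cechB k n M p).addSubgroupOf (cechZ k n M p)))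
    ((cechDeg k n M dg p j).comap (cechZ k n M p).subtype)

variable (k n) in
/-- `a_i(M) = max{ j : H_m^i(M)_j ≠ 0 }`, as an extended real (`⊥ = -∞` if the
local cohomology vanishes). -/
def aInv (i : ℕ) : EReal :=
  sSup {x : EReal | ∃ j : ℤ, cechHdeg k n M dg i j ≠ ⊥ ∧ x = ((j : ℝ) : EReal)}

variable (k n) in
/-- The partial regularity `reg_t(M) = max{ a_i(M) + i : i ≤ t }`. -/
def regT (t : ℕ) : EReal :=
  sSup {x : EReal | ∃ i ≤ t, x = aInv k n M dg i + ((i : ℝ) : EReal)}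

variable (k n) in
/-- `a*_t(M) = max{ a_i(M) : i ≤ t }`. -/
def aStarT (t : ℕ) : EReal :=
  sSup {x : EReal | ∃ i ≤ t, x = aInv k n M dg i}

variable (k n) in
/-- The Castelnuovo–Mumford regularity `reg M = max_i { a_i(M) + i }`. -/
def cmReg : EReal :=
  sSup {x : EReal | ∃ i : ℕ, x = aInv k n M dg i + ((i : ℝ) : EReal)}

variable (k n) in
/-- The `a^*`-invariant `a^*(M) = max_i a_i(M)`. -/
def aStar : EReal :=
  sSup {x : EReal | ∃ i : ℕ, x = aInv k n M dg i}

/-- The canonical grading of a quotient `S/I` by a homogeneous ideal. -/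
def quotDeg (I : Ideal (MvPolynomial (Fin n) k)) (j : ℤ) :
    AddSubgroup ((MvPolynomial (Fin n) k) ⧸ I) :=
  if 0 ≤ j then
    AddSubgroup.map (Ideal.Quotient.mk I).toAddMonoidHom
      ((homogeneousSubmodule (Fin n) k j.toNat).toAddSubgroup)
  else ⊥

/-- The canonical grading of a homogeneous ideal `I ⊆ S`, viewed as an `S`-module. -/
def idealDeg (I : Ideal (MvPolynomial (Fin n) k)) (j : ℤ) : AddSubgroup I :=
  if 0 ≤ j then
    AddSubgroup.comap (Submodule.subtype I).toAddMonoidHom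
      ((homogeneousSubmodule (Fin n) k j.toNat).toAddSubgroup)
  else ⊥

variable (k n) in
/-- `a_i(S/I)` for a homogeneous ideal `I`. -/
def aQuot (I : Ideal (MvPolynomial (Fin n) k)) (i : ℕ) : EReal :=
  aInv k n ((MvPolynomial (Fin n) k) ⧸ I) (quotDeg I) i

variable (k n) in
/-- `a_i(I)` for a homogeneous ideal `I` viewed as a graded `S`-module. -/
def aIdealMod (I : Ideal (MvPolynomial (Fin n) k)) (i : ℕ) : EReal :=
  aInv k n I (idealDeg I) i


variable (k n) in
/-- `reg_t(S/I)` for a homogeneous ideal `I`. -/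
def regTQuot (I : Ideal (MvPolynomial (Fin n) k)) (t : ℕ) : EReal :=
  regT k n ((MvPolynomial (Fin n) k) ⧸ I) (quotDeg I) t

variable (k n) in
/-- `a*_t(S/I)` for a homogeneous ideal `I`. -/
def aStarTQuot (I : Ideal (MvPolynomial (Fin n) k)) (t : ℕ) : EReal :=
  aStarT k n ((MvPolynomial (Fin n) k) ⧸ I) (quotDeg I) t

variable (k n) in
/-- `reg(S/I)` for a homogeneous ideal `I`. -/
def cmRegQuot (I : Ideal (MvPolynomial (Fin n) k)) : EReal :=
  cmReg k n ((MvPolynomial (Fin n) k) ⧸ I) (quotDeg I)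

variable (k n) in
/-- `a^*(S/I)` for a homogeneous ideal `I`. -/
def aStarQuot (I : Ideal (MvPolynomial (Fin n) k)) : EReal :=
  aStar k n ((MvPolynomial (Fin n) k) ⧸ I) (quotDeg I)

variable (k n) in
/-- `reg_t(I)` for a homogeneous ideal `I` viewed as a graded module. -/
def regTIdeal (I : Ideal (MvPolynomial (Fin n) k)) (t : ℕ) : EReal :=
  regT k n I (idealDeg I) t

variable (k n) in
/-- `a*_t(I)` for a homogeneous ideal `I` viewed as a graded module. -/
def aStarTIdeal (I : Ideal (MvPolynomial (Fin n) k)) (t : ℕ) : EReal :=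
  aStarT k n I (idealDeg I) t

variable (k n) in
/-- `reg(I)`, the Castelnuovo–Mumford regularity of the ideal `I` as a graded module. -/
def cmRegIdeal (I : Ideal (MvPolynomial (Fin n) k)) : EReal :=
  cmReg k n I (idealDeg I)

variable (k n) in
/-- The depth of a module: the maximal length of a regular sequence contained in the
maximal graded ideal. -/
def moduleDepth (N : Type) [AddCommGroup N] [Module (MvPolynomial (Fin n) k) N] : ℕ :=
  sSup {d : ℕ | ∃ rs : List (MvPolynomial (Fin n) k), rs.length = d ∧
    (∀ r ∈ rs, r ∈ maxIdeal k n) ∧ RingTheory.Sequence.IsRegular N rs}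

variable (k n) in
/-- The (Krull) dimension of a module, i.e. of `S` modulo its annihilator. -/
def moduleDim (N : Type) [AddCommGroup N] [Module (MvPolynomial (Fin n) k) N] :
    WithBot ℕ∞ :=
  ringKrullDim ((MvPolynomial (Fin n) k) ⧸ Module.annihilator (MvPolynomial (Fin n) k) N)

variable (k n) in
/-- A Cohen–Macaulay module: zero, or of depth equal to its dimension. -/
def IsCMmod (N : Type) [AddCommGroup N] [Module (MvPolynomial (Fin n) k) N] : Prop :=
  Subsingleton N ∨ ((moduleDepth k n N : ℕ∞) : WithBot ℕ∞) = moduleDim k n N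

/-- The satiety `s(I^{sat}/I)`: the largest degree `j` with `(I^{sat}/I)_j ≠ 0`,
i.e. with `(I^{sat})_j ⊄ I_j`, as an extended real. -/
def satietyDeg {k : Type} [Field k] {n : ℕ} (I : Ideal (MvPolynomial (Fin n) k)) : EReal :=
  sSup {x : EReal | ∃ j : ℕ,
    (∃ f ∈ homogeneousSubmodule (Fin n) k j, f ∈ satur I ∧ f ∉ I) ∧ x = ((j : ℝ) : EReal)}

/-- Maximal degree of a minimal monomial generator. -/
def genDeg {k : Type} [Field k] {n : ℕ} (I : Ideal (MvPolynomial (Fin n) k)) : ℕ :=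
  sSup {d : ℕ | ∃ u ∈ minGens I, expDeg u = d}

/-- `m(u)`: the (1-based) largest index of a variable dividing the monomial `x^u`. -/
def mVal {n : ℕ} (u : Fin n →₀ ℕ) : ℕ :=
  u.support.sup (fun i => (i : ℕ) + 1)

variable (k n) in
/-- The degree-`t` part of a graded free module `⊕_j S(-d_j)`, realized as
`Fin r →₀ S`: the `j`-th coordinate must be homogeneous of degree `t - d j`. -/
def freeDeg (r : ℕ) (d : Fin r → ℤ) (t : ℤ) :
    AddSubgroup (Fin r →₀ MvPolynomial (Fin n) k) where
  carrier := {f | ∀ j : Fin r,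
    (0 ≤ t - d j → f j ∈ homogeneousSubmodule (Fin n) k (t - d j).toNat) ∧
    (t - d j < 0 → f j = 0)}
  zero_mem' := by
    intro j
    exact ⟨fun _ => by simp, fun _ => by simp⟩
  add_mem' := by
    intro a b ha hb j
    refine ⟨fun h => ?_, fun h => ?_⟩
    · simpa [Finsupp.add_apply] using add_mem ((ha j).1 h) ((hb j).1 h)
    · simp [Finsupp.add_apply, (ha j).2 h, (hb j).2 h]
  neg_mem' := by
    intro a ha j
    refine ⟨fun h => ?_, fun h => ?_⟩
    · simpa [Finsupp.neg_apply] using neg_mem ((ha j).1 h)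
    · simp [Finsupp.neg_apply, (ha j).2 h]

/-- A minimal graded free resolution
`0 → F_s → ⋯ → F_1 → F_0 → M → 0` of a graded module `M` (with grading `dg`),
where `F_i` is free with `rk i` generators of degrees `dgen i j`. -/
structure MinimalGradedFreeRes (dg : ℤ → AddSubgroup M) where
  /-- length of the resolution -/
  s : ℕ
  /-- ranks of the free modules -/
  rk : ℕ → ℕ
  /-- degrees of the generators -/
  dgen : (i : ℕ) → Fin (rk i) → ℤ
  /-- the differentials `F_{i+1} → F_i` -/
  φ : (i : ℕ) → (Fin (rk (i + 1)) →₀ MvPolynomial (Fin n) k) →ₗ[MvPolynomial (Fin n) k]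
      (Fin (rk i) →₀ MvPolynomial (Fin n) k)
  /-- the augmentation `F_0 → M` -/
  ε : (Fin (rk 0) →₀ MvPolynomial (Fin n) k) →ₗ[MvPolynomial (Fin n) k] M
  rk_eq_zero : ∀ i, s < i → rk i = 0
  ε_surj : Function.Surjective ε
  ε_graded : ∀ (t : ℤ) x, x ∈ freeDeg k n (rk 0) (dgen 0) t → ε x ∈ dg t
  φ_graded : ∀ (i : ℕ) (t : ℤ) x, x ∈ freeDeg k n (rk (i + 1)) (dgen (i + 1)) t →
    φ i x ∈ freeDeg k n (rk i) (dgen i) t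
  exact_aug : LinearMap.ker ε = LinearMap.range (φ 0)
  exact_mid : ∀ i : ℕ, LinearMap.ker (φ i) = LinearMap.range (φ (i + 1))
  minimal : ∀ (i : ℕ) x (j : Fin (rk i)), (φ i x) j ∈ maxIdeal k n


-- ===================== auxiliary lemmas =====================

lemma expDeg_eq_degree (u : Fin n →₀ ℕ) : expDeg u = Finsupp.degree u := rfl

lemma expDeg_add (u v : Fin n →₀ ℕ) : expDeg (u + v) = expDeg u + expDeg v :=
  Finsupp.sum_add_index' (fun _ => rfl) (fun _ _ _ => rfl)

lemma expDeg_single (i : Fin n) (c : ℕ) : expDeg (Finsupp.single i c) = c :=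
  Finsupp.sum_single_index rfl

lemma expDeg_mono {u v : Fin n →₀ ℕ} (h : u ≤ v) : expDeg u ≤ expDeg v := by
  have hv : u + (v - u) = v := add_tsub_cancel_of_le h
  rw [← hv, expDeg_add]
  exact Nat.le_add_right _ _

lemma exists_one_le_of_expDeg {v : Fin n →₀ ℕ} (h : 1 ≤ expDeg v) : ∃ i, 1 ≤ v i := by
  have hne : v ≠ 0 := by
    intro h0; subst h0; simp [expDeg, Finsupp.sum_zero_index] at h
  obtain ⟨i, hi⟩ := Finsupp.support_nonempty_iff.mpr hne
  exact ⟨i, Nat.one_le_iff_ne_zero.mpr (Finsupp.mem_support_iff.mp hi)⟩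

lemma exists_trunc (T : ℕ) :
    ∀ (e : ℕ) (v : Fin n →₀ ℕ), expDeg v = e → T ≤ e → ∃ v', v' ≤ v ∧ expDeg v' = T := by
  intro e
  induction e with
  | zero => intro v hv hT; exact ⟨v, le_rfl, by omega⟩
  | succ e ih =>
    intro v hv hT
    rcases eq_or_lt_of_le hT with h | h
    · exact ⟨v, le_rfl, by omega⟩
    · have hT' : T ≤ e := by omega
      have hv0 : v ≠ 0 := by
        intro h0; subst h0; simp [expDeg] at hv
      obtain ⟨i, hi⟩ := Finsupp.support_nonempty_iff.mpr hv0
      have hi1 : 1 ≤ v i := Nat.one_le_iff_ne_zero.mpr (Finsupp.mem_support_iff.mp hi)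
      have hle : Finsupp.single i 1 ≤ v := Finsupp.single_le_iff.mpr hi1
      have hsum : (v - Finsupp.single i 1) + Finsupp.single i 1 = v := tsub_add_cancel_of_le hle
      have hdeg : expDeg (v - Finsupp.single i 1) = e := by
        have := congrArg expDeg hsum
        rw [expDeg_add, expDeg_single] at this
        omega
      obtain ⟨v', hv'le, hv'⟩ := ih (v - Finsupp.single i 1) hdeg hT'
      exact ⟨v', hv'le.trans tsub_le_self, hv'⟩

lemma monomial_mem_span_iff (A : Set (Fin n →₀ ℕ)) (u : Fin n →₀ ℕ) :
    monomial u (1 : k) ∈ Ideal.span ((fun s => monomial s (1 : k)) '' A) ↔ ∃ a ∈ A, a ≤ u := by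
  classical
  rw [mem_ideal_span_monomial_image]
  constructor
  · intro h
    exact h u (by rw [support_monomial, if_neg one_ne_zero]; exact Finset.mem_singleton_self u)
  · rintro ⟨a, ha, hle⟩ m hm
    rw [support_monomial, if_neg one_ne_zero] at hm
    simp only [Finset.mem_singleton] at hm
    subst hm
    exact ⟨a, ha, hle⟩

lemma irredPow_eq (b : Fin n →₀ ℕ) :
    irredPow k b = Ideal.span ((fun s => monomial s (1 : k)) ''
      {v | ∃ i : Fin n, 1 ≤ b i ∧ v = Finsupp.single i (b i)}) := by
  unfold irredPow
  congr 1
  ext f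
  constructor
  · rintro ⟨i, hi, rfl⟩
    exact ⟨Finsupp.single i (b i), ⟨i, hi, rfl⟩, X_pow_eq_monomial.symm⟩
  · rintro ⟨v, ⟨i, hi, rfl⟩, rfl⟩
    exact ⟨i, hi, X_pow_eq_monomial.symm⟩

lemma mem_irredPow_monomial (b u : Fin n →₀ ℕ) :
    monomial u (1 : k) ∈ irredPow k b ↔ ∃ i, 1 ≤ b i ∧ b i ≤ u i := by
  rw [irredPow_eq, monomial_mem_span_iff]
  constructor
  · rintro ⟨a, ⟨i, hi, rfl⟩, hle⟩
    exact ⟨i, hi, Finsupp.single_le_iff.mp hle⟩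
  · rintro ⟨i, hi, h⟩
    exact ⟨_, ⟨i, hi, rfl⟩, Finsupp.single_le_iff.mpr h⟩

lemma mem_irredPow_iff (b : Fin n →₀ ℕ) (f : MvPolynomial (Fin n) k) :
    f ∈ irredPow k b ↔ ∀ u ∈ f.support, ∃ i, 1 ≤ b i ∧ b i ≤ u i := by
  rw [irredPow_eq, mem_ideal_span_monomial_image]
  refine forall₂_congr fun u _ => ?_
  constructor
  · rintro ⟨a, ⟨i, hi, rfl⟩, hle⟩
    exact ⟨i, hi, Finsupp.single_le_iff.mp hle⟩
  · rintro ⟨i, hi, h⟩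
    exact ⟨_, ⟨i, hi, rfl⟩, Finsupp.single_le_iff.mpr h⟩

lemma X_mem_maxIdeal (i : Fin n) : (X i : MvPolynomial (Fin n) k) ∈ maxIdeal k n :=
  Ideal.subset_span ⟨i, rfl⟩

lemma monomial_mem_maxIdeal_pow (v : Fin n →₀ ℕ) :
    monomial v (1 : k) ∈ maxIdeal k n ^ expDeg v := by
  induction v using Finsupp.induction with
  | zero => simp [expDeg, Finsupp.sum_zero_index, monomial_zero']
  | single_add i c f hi hc ih =>
    have heq : monomial (Finsupp.single i c + f) (1 : k) = X i ^ c * monomial f 1 := by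
      rw [X_pow_eq_monomial, monomial_mul, one_mul]
    rw [heq, expDeg_add, expDeg_single, pow_add]
    exact Ideal.mul_mem_mul (Ideal.pow_mem_pow (X_mem_maxIdeal i) c) ih

lemma maxIdeal_pow_le (T : ℕ) :
    maxIdeal k n ^ T ≤ Ideal.span ((fun s => monomial s (1 : k)) '' {v | T ≤ expDeg v}) := by
  induction T with
  | zero =>
    rw [pow_zero, Ideal.one_eq_top]
    have h1 : (1 : MvPolynomial (Fin n) k) ∈
        Ideal.span ((fun s => monomial s (1 : k)) '' {v | 0 ≤ expDeg v}) :=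
      Ideal.subset_span ⟨0, Nat.zero_le _, by simp [monomial_zero']⟩
    exact ((Ideal.eq_top_iff_one _).mpr h1).ge
  | succ T ih =>
    rw [pow_succ]
    calc maxIdeal k n ^ T * maxIdeal k n
        ≤ Ideal.span ((fun s => monomial s (1 : k)) '' {v | T ≤ expDeg v}) *
          Ideal.span (Set.range X) := Ideal.mul_mono ih le_rfl
      _ ≤ _ := by
          rw [Ideal.span_mul_span']
          rw [Ideal.span_le]
          rintro _ ⟨_, ⟨v, hv, rfl⟩, _, ⟨i, rfl⟩, rfl⟩
          have hv' : T ≤ expDeg v := hv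
          have heq : (monomial v (1 : k)) * X i = monomial (v + Finsupp.single i 1) 1 := by
            rw [← pow_one (X i), X_pow_eq_monomial, monomial_mul, mul_one]
          show (monomial v (1 : k)) * X i ∈ _
          rw [heq]
          exact Ideal.subset_span ⟨v + Finsupp.single i 1,
            by simp only [Set.mem_setOf_eq, expDeg_add, expDeg_single]; omega, rfl⟩

lemma monomial_mem_colon (I : Ideal (MvPolynomial (Fin n) k)) (u : Fin n →₀ ℕ) (T : ℕ)
    (H : ∀ v : Fin n →₀ ℕ, T ≤ expDeg v → monomial (u + v) (1 : k) ∈ I) :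
    monomial u (1 : k) ∈ Submodule.colon I ((maxIdeal k n ^ T : Ideal (MvPolynomial (Fin n) k)) : Set (MvPolynomial (Fin n) k)) := by
  rw [Submodule.mem_colon]
  intro p hp
  have hp' := maxIdeal_pow_le T hp
  have hle : Ideal.span ((fun s => monomial s (1 : k)) '' {v | T ≤ expDeg v}) ≤
      Submodule.comap (LinearMap.mulRight (MvPolynomial (Fin n) k) (monomial u (1 : k))) I := by
    rw [Ideal.span_le]
    rintro _ ⟨v, hv, rfl⟩
    simp only [SetLike.mem_coe, Submodule.mem_comap, LinearMap.mulRight_apply]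
    rw [monomial_mul, one_mul, add_comm]
    exact H v hv
  have := hle hp'
  simpa [smul_eq_mul, mul_comm] using this

lemma mem_satur_of (I : Ideal (MvPolynomial (Fin n) k)) (u : Fin n →₀ ℕ) (T : ℕ)
    (H : ∀ v : Fin n →₀ ℕ, T ≤ expDeg v → monomial (u + v) (1 : k) ∈ I) :
    monomial u (1 : k) ∈ satur I :=
  (le_iSup (fun t : ℕ => Submodule.colon I ((maxIdeal k n ^ t : Ideal (MvPolynomial (Fin n) k)) : Set (MvPolynomial (Fin n) k))) T) (monomial_mem_colon I u T H)

lemma mem_satur_iff (I : Ideal (MvPolynomial (Fin n) k)) (f : MvPolynomial (Fin n) k) :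
    f ∈ satur I ↔ ∃ t : ℕ, f ∈ Submodule.colon I ((maxIdeal k n ^ t : Ideal (MvPolynomial (Fin n) k)) : Set (MvPolynomial (Fin n) k)) := by
  unfold satur infColon
  rw [Submodule.mem_iSup_of_directed]
  exact (Monotone.directed_le fun a b hab =>
    Submodule.colon_mono le_rfl (SetLike.coe_subset_coe.mpr (Ideal.pow_le_pow_right hab)))

lemma monomial_mem_satur_of_mem (A : Set (Fin n →₀ ℕ)) {f : MvPolynomial (Fin n) k}
    {u : Fin n →₀ ℕ}
    (hf : f ∈ satur (Ideal.span ((fun s => monomial s (1 : k)) '' A))) (hu : u ∈ f.support) :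
    monomial u (1 : k) ∈ satur (Ideal.span ((fun s => monomial s (1 : k)) '' A)) := by
  set I := Ideal.span ((fun s => monomial s (1 : k)) '' A) with hIdef
  obtain ⟨T, hT⟩ := (mem_satur_iff I f).mp hf
  apply mem_satur_of I u T
  intro v hv
  obtain ⟨v', hv'le, hv'⟩ := exists_trunc T (expDeg v) v rfl hv
  have hmv' : monomial v' (1 : k) ∈ maxIdeal k n ^ T := hv' ▸ monomial_mem_maxIdeal_pow v'
  rw [Submodule.mem_colon] at hT
  have hfI : f * monomial v' 1 ∈ I := by simpa [smul_eq_mul] using hT _ hmv'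
  have hco : coeff (u + v') (f * monomial v' 1) = coeff u f := by
    simpa using coeff_mul_monomial u v' (1 : k) f
  have hmem : (u + v') ∈ (f * monomial v' 1).support :=
    mem_support_iff.mpr (by rw [hco]; exact mem_support_iff.mp hu)
  obtain ⟨a, haA, hale⟩ := mem_ideal_span_monomial_image.mp hfI _ hmem
  exact (monomial_mem_span_iff A _).mpr ⟨a, haA, hale.trans (add_le_add_right hv'le u)⟩

def ustar (b : Fin n →₀ ℕ) : Fin n →₀ ℕ := Finsupp.mapRange (· - 1) (Nat.zero_sub 1) b

lemma ustar_apply (b : Fin n →₀ ℕ) (i : Fin n) : ustar b i = b i - 1 :=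
  Finsupp.mapRange_apply

lemma homog_monomial_ustar (b : Fin n →₀ ℕ) :
    monomial (ustar b) (1 : k) ∈ homogeneousSubmodule (Fin n) k (expDeg (ustar b)) := by
  rw [mem_homogeneousSubmodule]
  exact isHomogeneous_monomial _ rfl

lemma satietyDeg_irredPow_ge (b : Fin n →₀ ℕ) (hb : ∀ i, 1 ≤ b i) :
    ((expDeg (ustar b) : ℝ) : EReal) ≤ satietyDeg (irredPow k b) := by
  apply le_sSup
  refine ⟨expDeg (ustar b), ⟨monomial (ustar b) (1 : k), homog_monomial_ustar b, ?_, ?_⟩, rfl⟩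
  · apply mem_satur_of _ _ 1
    intro v hv
    rw [mem_irredPow_monomial]
    obtain ⟨i, hi⟩ := exists_one_le_of_expDeg hv
    refine ⟨i, hb i, ?_⟩
    rw [Finsupp.add_apply, ustar_apply]
    have := hb i
    omega
  · rw [mem_irredPow_monomial]
    rintro ⟨i, hi1, hile⟩
    rw [ustar_apply] at hile
    omega

lemma deg_of_mem_homog {j : ℕ} {f : MvPolynomial (Fin n) k} {u : Fin n →₀ ℕ}
    (hf : f ∈ homogeneousSubmodule (Fin n) k j) (hu : u ∈ f.support) : expDeg u = j := by
  have := ((mem_homogeneousSubmodule _ _).mp hf) (mem_support_iff.mp hu)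
  rw [expDeg_eq_degree, Finsupp.degree_eq_weight_one]
  exact this

lemma satietyDeg_irredPow_le (b : Fin n →₀ ℕ) (hb : ∀ i, 1 ≤ b i) :
    satietyDeg (irredPow k b) ≤ ((expDeg (ustar b) : ℝ) : EReal) := by
  apply sSup_le
  rintro x ⟨j, ⟨f, hfh, _, hfI⟩, rfl⟩
  have hex : ¬ ∀ u ∈ f.support, ∃ i, 1 ≤ b i ∧ b i ≤ u i :=
    fun h => hfI ((mem_irredPow_iff b f).mpr h)
  push_neg at hex
  obtain ⟨u, hu, hcond⟩ := hex
  have hle : u ≤ ustar b := Finsupp.le_def.mpr fun i => by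
    rw [ustar_apply]
    have h1 := hb i
    have h2 := hcond i h1
    omega
  have hdeg : expDeg u = j := deg_of_mem_homog hfh hu
  have : j ≤ expDeg (ustar b) := hdeg ▸ expDeg_mono hle
  exact_mod_cast this

lemma satietyDeg_irredPow_bot (b : Fin n →₀ ℕ) (hb : ∃ i, b i = 0) :
    satietyDeg (irredPow k b) = ⊥ := by
  obtain ⟨i0, hi0⟩ := hb
  refine le_antisymm (sSup_le ?_) bot_le
  rintro x ⟨j, ⟨f, _, hfs, hfn⟩, rfl⟩
  exfalso
  apply hfn
  obtain ⟨t, ht⟩ := (mem_satur_iff _ _).mp hfs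
  rw [Submodule.mem_colon] at ht
  have hXt : (X i0 : MvPolynomial (Fin n) k) ^ t ∈ maxIdeal k n ^ t :=
    Ideal.pow_mem_pow (X_mem_maxIdeal i0) t
  have hmul : f * X i0 ^ t ∈ irredPow k b := by simpa [smul_eq_mul] using ht _ hXt
  rw [mem_irredPow_iff] at hmul
  rw [mem_irredPow_iff]
  intro u hu
  have hco : coeff (u + Finsupp.single i0 t) (f * X i0 ^ t) = coeff u f := by
    rw [X_pow_eq_monomial]
    simpa using coeff_mul_monomial u (Finsupp.single i0 t) (1 : k) f
  have hmem : u + Finsupp.single i0 t ∈ (f * X i0 ^ t).support :=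
    mem_support_iff.mpr (by rw [hco]; exact mem_support_iff.mp hu)
  obtain ⟨i, hi1, hile⟩ := hmul _ hmem
  refine ⟨i, hi1, ?_⟩
  have hne : ¬ (i0 = i) := fun h => by subst h; omega
  rwa [Finsupp.add_apply, Finsupp.single_apply, if_neg hne, add_zero] at hile


/-- The satiety of a Borel type monomial ideal equals the maximum of
the satieties of the components of its irredundant irreducible decomposition. -/
theorem satiety_of_irreducible_decomposition
    {k : Type} [Field k] {n : ℕ} (I : Ideal (MvPolynomial (Fin n) k))
    (hI : IsMonomialIdeal I) (hB : IsBorelType I)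
    (B : Finset (Fin n →₀ ℕ))
    (hdec : I = ⨅ b ∈ B, irredPow k b)
    (hirr : ∀ b ∈ B, (⨅ c ∈ B.erase b, irredPow k c) ≠ I) :
    satietyDeg I = sSup {x : EReal | ∃ b ∈ B, x = satietyDeg (irredPow k b)} := by
  obtain ⟨A, hA⟩ := hI
  have hmemI : ∀ g : MvPolynomial (Fin n) k, g ∈ I ↔ ∀ c ∈ B, g ∈ irredPow k c := by
    intro g
    rw [hdec]
    simp [Submodule.mem_iInf]
  apply le_antisymm
  · -- LHS ≤ RHS
    unfold satietyDeg
    apply sSup_le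
    rintro x ⟨j, ⟨f, hfh, hfs, hfn⟩, rfl⟩
    have hex : ∃ u ∈ f.support, monomial u (1 : k) ∉ I := by
      by_contra h
      push_neg at h
      apply hfn
      rw [hA, mem_ideal_span_monomial_image]
      intro u hu
      have := h u hu
      rw [hA, monomial_mem_span_iff] at this
      exact this
    obtain ⟨u, hu, hun⟩ := hex
    have hus : monomial u (1 : k) ∈ satur I := by
      rw [hA] at hfs ⊢
      exact monomial_mem_satur_of_mem A hfs hu
    have hexc : ¬ ∀ c ∈ B, monomial u (1 : k) ∈ irredPow k c :=
      fun h => hun ((hmemI _).mpr h)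
    push_neg at hexc
    obtain ⟨c, hcB, hcn⟩ := hexc
    have hcfull : ∀ i, 1 ≤ c i := by
      by_contra h
      push_neg at h
      obtain ⟨i0, hi0⟩ := h
      apply hcn
      obtain ⟨t, ht⟩ := (mem_satur_iff _ _).mp hus
      rw [Submodule.mem_colon] at ht
      have hmul : monomial u (1 : k) * X i0 ^ t ∈ I := by
        simpa [smul_eq_mul] using ht _ (Ideal.pow_mem_pow (X_mem_maxIdeal i0) t)
      have hmul' : monomial (u + Finsupp.single i0 t) (1 : k) ∈ irredPow k c := by
        have heq : monomial u (1 : k) * X i0 ^ t = monomial (u + Finsupp.single i0 t) 1 := by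
          rw [X_pow_eq_monomial, monomial_mul, mul_one]
        rw [← heq]
        exact (hmemI _).mp hmul c hcB
      rw [mem_irredPow_monomial] at hmul' ⊢
      obtain ⟨i, hi1, hile⟩ := hmul'
      have hne : ¬ (i0 = i) := fun h => by subst h; omega
      refine ⟨i, hi1, ?_⟩
      rwa [Finsupp.add_apply, Finsupp.single_apply, if_neg hne, add_zero] at hile
    rw [mem_irredPow_monomial] at hcn
    push_neg at hcn
    have hle : u ≤ ustar c := Finsupp.le_def.mpr fun i => by
      rw [ustar_apply]
      have h1 := hcfull i
      have h2 := hcn i h1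
      omega
    have hdeg : expDeg u = j := deg_of_mem_homog hfh hu
    have hj : j ≤ expDeg (ustar c) := hdeg ▸ expDeg_mono hle
    calc ((j : ℝ) : EReal) ≤ ((expDeg (ustar c) : ℝ) : EReal) := by exact_mod_cast hj
      _ ≤ satietyDeg (irredPow k c) := satietyDeg_irredPow_ge c hcfull
      _ ≤ sSup {x : EReal | ∃ b ∈ B, x = satietyDeg (irredPow k b)} := le_sSup ⟨c, hcB, rfl⟩
  · -- RHS ≤ LHS
    apply sSup_le
    rintro x ⟨b, hbB, rfl⟩
    by_cases hbfull : ∀ i, 1 ≤ b i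
    · refine le_trans (satietyDeg_irredPow_le b hbfull) ?_
      have hIle : I ≤ ⨅ c ∈ B.erase b, irredPow k c := by
        rw [hdec]
        exact le_iInf₂ fun c hc => iInf₂_le c (Finset.mem_of_mem_erase hc)
      obtain ⟨g, hg, hgI⟩ : ∃ g, g ∈ (⨅ c ∈ B.erase b, irredPow k c) ∧ g ∉ I := by
        by_contra h
        push_neg at h
        exact hirr b hbB (le_antisymm (fun x hx => h x hx) hIle)
      have hg' : ∀ c ∈ B.erase b, g ∈ irredPow k c := by
        intro c hc
        have := (Submodule.mem_iInf _).mp hg c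
        exact (Submodule.mem_iInf _).mp this hc
      have hgb : g ∉ irredPow k b := by
        intro hgb
        apply hgI
        rw [hmemI]
        intro c hc
        by_cases hcb : c = b
        · subst hcb; exact hgb
        · exact hg' c (Finset.mem_erase.mpr ⟨hcb, hc⟩)
      rw [mem_irredPow_iff] at hgb
      push_neg at hgb
      obtain ⟨w, hw, hwcond⟩ := hgb
      have hwle : w ≤ ustar b := Finsupp.le_def.mpr fun i => by
        rw [ustar_apply]
        have := hwcond i (hbfull i)
        omega
      have hwmem : ∀ c ∈ B.erase b, monomial w (1 : k) ∈ irredPow k c := by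
        intro c hc
        have := hg' c hc
        rw [mem_irredPow_iff] at this
        exact (mem_irredPow_monomial _ _).mpr (this w hw)
      unfold satietyDeg
      apply le_sSup
      refine ⟨expDeg (ustar b), ⟨monomial (ustar b) (1 : k), homog_monomial_ustar b, ?_, ?_⟩, rfl⟩
      · apply mem_satur_of _ _ 1
        intro v hv
        rw [hmemI]
        intro c hc
        by_cases hcb : c = b
        · subst hcb
          rw [mem_irredPow_monomial]
          obtain ⟨i, hi⟩ := exists_one_le_of_expDeg hv
          refine ⟨i, hbfull i, ?_⟩
          rw [Finsupp.add_apply, ustar_apply]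
          have := hbfull i
          omega
        · have := hwmem c (Finset.mem_erase.mpr ⟨hcb, hc⟩)
          rw [mem_irredPow_monomial] at this ⊢
          obtain ⟨i, h1, h2⟩ := this
          refine ⟨i, h1, ?_⟩
          rw [Finsupp.add_apply]
          have := Finsupp.le_def.mp hwle i
          omega
      · intro hmem
        have hmem' : monomial (ustar b) (1 : k) ∈ irredPow k b := (hmemI _).mp hmem b hbB
        rw [mem_irredPow_monomial] at hmem'
        obtain ⟨i, h1, h2⟩ := hmem'
        rw [ustar_apply] at h2
        omega
    · push_neg at hbfull
      obtain ⟨i0, hi0⟩ := hbfull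
      rw [satietyDeg_irredPow_bot b ⟨i0, by omega⟩]
      exact bot_le


end
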